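/- Let F = ℚ(u) be the field of rational functions in one variable u over ℚ, and let V be the F-vector space with basis (L₁, L₂, L′₁, L′₂). Let T : V → V be the F-linear operator with T L₁ = L₁ + L′₁ + L′₂, T L₂ = L₂ + L′₁ − L′₂, T L′₁ = (u²−1)(L₁+L₂) + (u²−2)L′₁, and T L′₂ = (u²−1)(L₁−L₂) + (u²−2)L′₂. Then (T + 1)(T − u²) = 0; the u²-eigenspace of T is the two-dimensional subspace spanned by L₁ + L₂ + L′₁ and L₁ − L₂ + L′₂; and the (−1)-eigenspace of T is the two-dimensional subspace spanned by (u²−1)L₁ − (L′₁ + L′₂) and (u²−1)L₂ − (L′₁ − L′₂). -/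

import Mathlib

set_option linter.unusedSectionVars false

section LVaux
variable {R V : Type*} [CommRing R] [AddCommGroup V] [Module R V]
variable (a : R) (x0 x1 x2 x3 : V) (T : V →ₗ[R] V)
variable (h1 : T x0 = x0 + x2 + x3) (h2 : T x1 = x1 + x2 - x3)
variable (h3 : T x2 = (a - 1) • (x0 + x1) + (a - 2) • x2)
variable (h4 : T x3 = (a - 1) • (x0 - x1) + (a - 2) • x3)

include h1 h2 h3 h4

lemma LV_e1 : T (x0 + x1 + x2) = a • (x0 + x1 + x2) := by
  simp only [map_add, map_sub, map_smul, h1, h2, h3, h4]; module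

lemma LV_e2 : T (x0 - x1 + x3) = a • (x0 - x1 + x3) := by
  simp only [map_add, map_sub, map_smul, h1, h2, h3, h4]; module

lemma LV_f1 : T ((a - 1) • x0 - (x2 + x3)) = (-1 : R) • ((a - 1) • x0 - (x2 + x3)) := by
  simp only [map_add, map_sub, map_smul, h1, h2, h3, h4]; module

lemma LV_f2 : T ((a - 1) • x1 - (x2 - x3)) = (-1 : R) • ((a - 1) • x1 - (x2 - x3)) := by
  simp only [map_add, map_sub, map_smul, h1, h2, h3, h4]; module

lemma LV_c0 : (T + (LinearMap.id : V →ₗ[R] V)) ((T - a • (LinearMap.id : V →ₗ[R] V)) x0) = 0 := by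
  simp only [LinearMap.sub_apply, LinearMap.add_apply, LinearMap.smul_apply,
    LinearMap.id_apply, map_add, map_sub, map_smul, h1, h2, h3, h4]; module

lemma LV_c1 : (T + (LinearMap.id : V →ₗ[R] V)) ((T - a • (LinearMap.id : V →ₗ[R] V)) x1) = 0 := by
  simp only [LinearMap.sub_apply, LinearMap.add_apply, LinearMap.smul_apply,
    LinearMap.id_apply, map_add, map_sub, map_smul, h1, h2, h3, h4]; module

lemma LV_c2 : (T + (LinearMap.id : V →ₗ[R] V)) ((T - a • (LinearMap.id : V →ₗ[R] V)) x2) = 0 := by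
  simp only [LinearMap.sub_apply, LinearMap.add_apply, LinearMap.smul_apply,
    LinearMap.id_apply, map_add, map_sub, map_smul, h1, h2, h3, h4]; module

lemma LV_c3 : (T + (LinearMap.id : V →ₗ[R] V)) ((T - a • (LinearMap.id : V →ₗ[R] V)) x3) = 0 := by
  simp only [LinearMap.sub_apply, LinearMap.add_apply, LinearMap.smul_apply,
    LinearMap.id_apply, map_add, map_sub, map_smul, h1, h2, h3, h4]; module

end LVaux

section LVaux2
variable {R V : Type*} [CommRing R] [AddCommGroup V] [Module R V]
variable (a : R) (x0 x1 x2 x3 : V)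

lemma LV_b0 : (a + 1) • x0 =
    (x0 + x1 + x2) + (x0 - x1 + x3) + ((a - 1) • x0 - (x2 + x3)) := by module

lemma LV_b1 : (a + 1) • x1 =
    (x0 + x1 + x2) - (x0 - x1 + x3) + ((a - 1) • x1 - (x2 - x3)) := by module

end LVaux2

/-- The element `u` of the field `F = ℚ(u)` of rational functions over `ℚ`. -/
noncomputable def u : RatFunc ℚ := RatFunc.X

lemma two_ne_zero_ratfunc : (2 : RatFunc ℚ) ≠ 0 := by
  rw [show (2 : RatFunc ℚ) = algebraMap (Polynomial ℚ) (RatFunc ℚ) 2 from (map_ofNat _ 2).symm]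
  exact RatFunc.algebraMap_ne_zero (by norm_num)

lemma u_sq_add_one_ne : (u ^ 2 + 1 : RatFunc ℚ) ≠ 0 := by
  have h : (u ^ 2 + 1 : RatFunc ℚ)
      = algebraMap (Polynomial ℚ) (RatFunc ℚ) (Polynomial.X ^ 2 + Polynomial.C 1) := by
    simp [u, map_add, map_pow]
  rw [h]
  exact RatFunc.algebraMap_ne_zero (Polynomial.X_pow_add_C_ne_zero (by norm_num) 1)

/-- Formulas (7.6)(i′′) and (7.6)(j′) of Lusztig–Vogan: on the `ℚ(u)`-vector space with
basis `(L₁, L₂, L′₁, L′₂)`, the operator with `T L₁ = L₁ + L′₁ + L′₂`,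
`T L₂ = L₂ + L′₁ − L′₂`, `T L′₁ = (u²−1)(L₁+L₂) + (u²−2)L′₁`,
`T L′₂ = (u²−1)(L₁−L₂) + (u²−2)L′₂` satisfies `(T+1)(T−u²) = 0`, its `u²`-eigenspace is
the two-dimensional span of `L₁+L₂+L′₁` and `L₁−L₂+L′₂`, and its `(−1)`-eigenspace is the
two-dimensional span of `(u²−1)L₁ − (L′₁+L′₂)` and `(u²−1)L₂ − (L′₁−L′₂)`. -/
theorem hecke_type_two_imaginary_I_II (V : Type*) [AddCommGroup V]
    [Module (RatFunc ℚ) V] (b : Module.Basis (Fin 4) (RatFunc ℚ) V)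
    (T : V →ₗ[RatFunc ℚ] V)
    (h1 : T (b 0) = b 0 + b 2 + b 3)
    (h2 : T (b 1) = b 1 + b 2 - b 3)
    (h3 : T (b 2) = (u ^ 2 - 1) • (b 0 + b 1) + (u ^ 2 - 2) • b 2)
    (h4 : T (b 3) = (u ^ 2 - 1) • (b 0 - b 1) + (u ^ 2 - 2) • b 3) :
    (T + LinearMap.id) ∘ₗ (T - u ^ 2 • LinearMap.id) = 0 ∧
    Module.End.eigenspace T (u ^ 2) =
      Submodule.span (RatFunc ℚ) {b 0 + b 1 + b 2, b 0 - b 1 + b 3} ∧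
    Module.finrank (RatFunc ℚ) (Module.End.eigenspace T (u ^ 2)) = 2 ∧
    Module.End.eigenspace T (-1) =
      Submodule.span (RatFunc ℚ)
        {(u ^ 2 - 1) • b 0 - (b 2 + b 3), (u ^ 2 - 1) • b 1 - (b 2 - b 3)} ∧
    Module.finrank (RatFunc ℚ) (Module.End.eigenspace T (-1)) = 2 := by
  have hne : (u ^ 2 + 1 : RatFunc ℚ) ≠ 0 := u_sq_add_one_ne
  set v1 := b 0 + b 1 + b 2 with hv1
  set v2 := b 0 - b 1 + b 3 with hv2
  set w1 := (u ^ 2 - 1) • b 0 - (b 2 + b 3) with hw1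
  set w2 := (u ^ 2 - 1) • b 1 - (b 2 - b 3) with hw2
  -- eigenvector computations
  have e1 : T v1 = (u ^ 2 : RatFunc ℚ) • v1 :=
    LV_e1 (u ^ 2) (b 0) (b 1) (b 2) (b 3) T h1 h2 h3 h4
  have e2 : T v2 = (u ^ 2 : RatFunc ℚ) • v2 :=
    LV_e2 (u ^ 2) (b 0) (b 1) (b 2) (b 3) T h1 h2 h3 h4
  have f1 : T w1 = (-1 : RatFunc ℚ) • w1 :=
    LV_f1 (u ^ 2) (b 0) (b 1) (b 2) (b 3) T h1 h2 h3 h4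
  have f2 : T w2 = (-1 : RatFunc ℚ) • w2 :=
    LV_f2 (u ^ 2) (b 0) (b 1) (b 2) (b 3) T h1 h2 h3 h4
  -- membership of the generators
  have mv1 : v1 ∈ Submodule.span (RatFunc ℚ) ({v1, v2} : Set V) :=
    Submodule.subset_span (by simp)
  have mv2 : v2 ∈ Submodule.span (RatFunc ℚ) ({v1, v2} : Set V) :=
    Submodule.subset_span (by simp)
  have mw1 : w1 ∈ Submodule.span (RatFunc ℚ) ({w1, w2} : Set V) :=
    Submodule.subset_span (by simp)
  have mw2 : w2 ∈ Submodule.span (RatFunc ℚ) ({w1, w2} : Set V) :=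
    Submodule.subset_span (by simp)
  -- spans of the two pairs fill out V
  have hb0 : (u ^ 2 + 1 : RatFunc ℚ) • b 0 = v1 + v2 + w1 :=
    LV_b0 (u ^ 2) (b 0) (b 1) (b 2) (b 3)
  have hb1 : (u ^ 2 + 1 : RatFunc ℚ) • b 1 = v1 - v2 + w2 :=
    LV_b1 (u ^ 2) (b 0) (b 1) (b 2) (b 3)
  set S1 := Submodule.span (RatFunc ℚ) ({v1, v2} : Set V) with hS1
  set S2 := Submodule.span (RatFunc ℚ) ({w1, w2} : Set V) with hS2
  have mb0 : b 0 ∈ S1 ⊔ S2 := by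
    have h : b 0 = (u ^ 2 + 1 : RatFunc ℚ)⁻¹ • (v1 + v2 + w1) := by
      rw [← hb0, smul_smul, inv_mul_cancel₀ hne, one_smul]
    rw [h]
    exact Submodule.smul_mem _ _ (add_mem
      (add_mem (Submodule.mem_sup_left mv1) (Submodule.mem_sup_left mv2))
      (Submodule.mem_sup_right mw1))
  have mb1 : b 1 ∈ S1 ⊔ S2 := by
    have h : b 1 = (u ^ 2 + 1 : RatFunc ℚ)⁻¹ • (v1 - v2 + w2) := by
      rw [← hb1, smul_smul, inv_mul_cancel₀ hne, one_smul]
    rw [h]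
    exact Submodule.smul_mem _ _ (add_mem
      (sub_mem (Submodule.mem_sup_left mv1) (Submodule.mem_sup_left mv2))
      (Submodule.mem_sup_right mw2))
  have mb2 : b 2 ∈ S1 ⊔ S2 := by
    have h : b 2 = v1 - b 0 - b 1 := by rw [hv1]; abel
    rw [h]
    exact sub_mem (sub_mem (Submodule.mem_sup_left mv1) mb0) mb1
  have mb3 : b 3 ∈ S1 ⊔ S2 := by
    have h : b 3 = v2 - b 0 + b 1 := by rw [hv2]; abel
    rw [h]
    exact add_mem (sub_mem (Submodule.mem_sup_left mv2) mb0) mb1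
  have hsup : S1 ⊔ S2 = ⊤ := by
    rw [eq_top_iff, ← b.span_eq]
    apply Submodule.span_le.2
    rintro x ⟨i, rfl⟩
    fin_cases i
    · exact mb0
    · exact mb1
    · exact mb2
    · exact mb3
  -- spans sit inside the eigenspaces
  have le1 : S1 ≤ Module.End.eigenspace T (u ^ 2) := by
    apply Submodule.span_le.2
    rintro x hx
    rcases hx with rfl | hx
    · exact Module.End.mem_eigenspace_iff.2 e1
    · rcases hx with rfl
      exact Module.End.mem_eigenspace_iff.2 e2
  have le2 : S2 ≤ Module.End.eigenspace T (-1) := by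
    apply Submodule.span_le.2
    rintro x hx
    rcases hx with rfl | hx
    · exact Module.End.mem_eigenspace_iff.2 f1
    · rcases hx with rfl
      exact Module.End.mem_eigenspace_iff.2 f2
  -- reverse inclusions
  have key1 : Module.End.eigenspace T (u ^ 2) ≤ S1 := by
    intro v hv
    have hv' : v ∈ S1 ⊔ S2 := by rw [hsup]; trivial
    obtain ⟨y, hy, z, hz, rfl⟩ := Submodule.mem_sup.1 hv'
    have hz1 : z ∈ Module.End.eigenspace T (u ^ 2) := by
      have : y + z - y ∈ Module.End.eigenspace T (u ^ 2) :=
        Submodule.sub_mem _ hv (le1 hy)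
      simpa using this
    have hz2 := le2 hz
    rw [Module.End.mem_eigenspace_iff] at hz1 hz2
    have h0 : (u ^ 2 + 1 : RatFunc ℚ) • z = 0 := by
      have heq : (u ^ 2 : RatFunc ℚ) • z = -z := by
        rw [← hz1, hz2]; simp
      rw [add_smul, one_smul, heq]; abel
    have hz0 : z = 0 := by
      rcases smul_eq_zero.1 h0 with h | h
      · exact absurd h hne
      · exact h
    simpa [hz0] using hy
  have key2 : Module.End.eigenspace T (-1) ≤ S2 := by
    intro v hv
    have hv' : v ∈ S1 ⊔ S2 := by rw [hsup]; trivial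
    obtain ⟨y, hy, z, hz, rfl⟩ := Submodule.mem_sup.1 hv'
    have hy1 : y ∈ Module.End.eigenspace T (-1) := by
      have : y + z - z ∈ Module.End.eigenspace T (-1) :=
        Submodule.sub_mem _ hv (le2 hz)
      simpa using this
    have hy2 := le1 hy
    rw [Module.End.mem_eigenspace_iff] at hy1 hy2
    have h0 : (u ^ 2 + 1 : RatFunc ℚ) • y = 0 := by
      have heq : (u ^ 2 : RatFunc ℚ) • y = -y := by
        rw [← hy2, hy1]; simp
      rw [add_smul, one_smul, heq]; abel
    have hy0 : y = 0 := by
      rcases smul_eq_zero.1 h0 with h | h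
      · exact absurd h hne
      · exact h
    simpa [hy0] using hz
  have E1 : Module.End.eigenspace T (u ^ 2) = S1 := le_antisymm key1 le1
  have E2 : Module.End.eigenspace T (-1) = S2 := le_antisymm key2 le2
  -- linear independence
  have hliv : LinearIndependent (RatFunc ℚ) ![v1, v2] := by
    rw [LinearIndependent.pair_iff]
    intro s t hst
    have h2' := congrArg (fun f => b.repr f 2) hst
    have h3' := congrArg (fun f => b.repr f 3) hst
    simp [hv1, hv2, Finsupp.single_apply] at h2' h3'
    exact ⟨h2', h3'⟩
  have hliw : LinearIndependent (RatFunc ℚ) ![w1, w2] := by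
    rw [LinearIndependent.pair_iff]
    intro s t hst
    have h2' := congrArg (fun f => b.repr f 2) hst
    have h3' := congrArg (fun f => b.repr f 3) hst
    simp [hw1, hw2, Finsupp.single_apply] at h2' h3'
    have ht : t = s := by linear_combination h3'
    have h2s : (2 : RatFunc ℚ) * s = 0 := by rw [ht] at h2'; linear_combination -h2'
    have hs : s = 0 := (mul_eq_zero.1 h2s).resolve_left two_ne_zero_ratfunc
    exact ⟨hs, by rw [ht, hs]⟩
  -- finrank computations
  have hsetv : (Set.range ![v1, v2]) = ({v1, v2} : Set V) := by
    ext x; simp [Fin.exists_fin_two, eq_comm]; tauto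
  have hsetw : (Set.range ![w1, w2]) = ({w1, w2} : Set V) := by
    ext x; simp [Fin.exists_fin_two, eq_comm]; tauto
  have hr1 : Module.finrank (RatFunc ℚ) S1 = 2 := by
    rw [hS1, ← hsetv, finrank_span_eq_card hliv]
    simp
  have hr2 : Module.finrank (RatFunc ℚ) S2 = 2 := by
    rw [hS2, ← hsetw, finrank_span_eq_card hliw]
    simp
  -- composition vanishes
  have hcomp : (T + LinearMap.id) ∘ₗ (T - u ^ 2 • LinearMap.id) = 0 := by
    apply b.ext
    intro i
    rw [LinearMap.comp_apply, LinearMap.zero_apply]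
    fin_cases i
    · exact LV_c0 (u ^ 2) (b 0) (b 1) (b 2) (b 3) T h1 h2 h3 h4
    · exact LV_c1 (u ^ 2) (b 0) (b 1) (b 2) (b 3) T h1 h2 h3 h4
    · exact LV_c2 (u ^ 2) (b 0) (b 1) (b 2) (b 3) T h1 h2 h3 h4
    · exact LV_c3 (u ^ 2) (b 0) (b 1) (b 2) (b 3) T h1 h2 h3 h4
  exact ⟨hcomp, E1, E1 ▸ hr1, E2, E2 ▸ hr2⟩
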